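/- Let A > 0, ω > 0, K > 0, φ₀ ∈ ℝ with A²ω² < 1, and set B = sqrt(2(1 − A²ω²))/(K·A). Define a(t) = A cosh(ωt), φ(t) = φ₀ + (B/ω)·arcsin(tanh(ωt)), V(x) = 3ω²/K² + B²·cos²((ω/B)(x − φ₀)), H(t) = a'(t)/a(t), ρ(t) = φ'(t)²/2 + V(φ(t)), p(t) = φ'(t)²/2 − V(φ(t)). Then for all t ∈ ℝ both Einstein equations hold with curvature k = 1 and no matter (D = 0): H(t)² + 1/a(t)² = (K²/3) ρ(t) and a''(t)/a(t) = −(K²/6)(ρ(t) + 3 p(t)). -/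

import Mathlib

open Real

/-- The Ellis–Madsen closed-universe solution: a(t) = A cosh(ωt),
φ(t) = φ₀ + (B/ω) arcsin(tanh(ωt)), V(x) = 3ω²/K² + B² cos²((ω/B)(x − φ₀))
solves both Einstein equations with k = 1 and no matter. -/
theorem ellis_madsen_solution
    (A ω K φ₀ : ℝ) (hA : 0 < A) (hω : 0 < ω) (hK : 0 < K)
    (hAω : A ^ 2 * ω ^ 2 < 1)
    (B : ℝ) (hB : B = Real.sqrt (2 * (1 - A ^ 2 * ω ^ 2)) / (K * A))
    (a φ V H ρ p : ℝ → ℝ)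
    (ha : a = fun t => A * Real.cosh (ω * t))
    (hφ : φ = fun t => φ₀ + B / ω * Real.arcsin (Real.tanh (ω * t)))
    (hV : V = fun x => 3 * ω ^ 2 / K ^ 2 + B ^ 2 * (Real.cos (ω / B * (x - φ₀))) ^ 2)
    (hH : H = fun t => deriv a t / a t)
    (hρ : ρ = fun t => (deriv φ t) ^ 2 / 2 + V (φ t))
    (hp : p = fun t => (deriv φ t) ^ 2 / 2 - V (φ t)) :
    ∀ t : ℝ,
      H t ^ 2 + 1 / a t ^ 2 = K ^ 2 / 3 * ρ t ∧
      deriv (deriv a) t / a t = -(K ^ 2 / 6) * (ρ t + 3 * p t) := by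
  have hB2 : B ^ 2 = 2 * (1 - A ^ 2 * ω ^ 2) / (K ^ 2 * A ^ 2) := by
    rw [hB, div_pow, sq_sqrt (by nlinarith), mul_pow]
  have hBpos : 0 < B := by
    rw [hB]
    exact div_pos (Real.sqrt_pos.2 (by nlinarith)) (by positivity)
  -- derivative of a
  have hlin : ∀ t : ℝ, HasDerivAt (fun t : ℝ => ω * t) ω t := by
    intro t; simpa using (hasDerivAt_id t).const_mul ω
  have hda : ∀ t : ℝ, HasDerivAt a (A * (Real.sinh (ω * t) * ω)) t := by
    intro t; rw [ha]
    exact ((Real.hasDerivAt_cosh (ω * t)).comp t (hlin t)).const_mul A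
  have hda' : deriv a = fun t => A * (Real.sinh (ω * t) * ω) := funext fun t => (hda t).deriv
  have hdda : ∀ t : ℝ, deriv (deriv a) t = A * (Real.cosh (ω * t) * ω) * ω := by
    intro t
    rw [hda']
    have : HasDerivAt (fun t => A * (Real.sinh (ω * t) * ω)) (A * (Real.cosh (ω * t) * ω) * ω) t := by
      have := (((Real.hasDerivAt_sinh (ω * t)).comp t (hlin t)).mul_const ω).const_mul A
      exact this.congr_deriv (by ring)
    exact this.deriv
  intro t
  set c := Real.cosh (ω * t) with hc
  set s := Real.sinh (ω * t) with hs
  have hcpos : 0 < c := Real.cosh_pos _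
  have hcs : c ^ 2 = s ^ 2 + 1 := Real.cosh_sq _
  have hslt : s < c := Real.sinh_lt_cosh _
  have hslt' : -c < s := by
    have h1 : Real.sinh (-(ω * t)) < Real.cosh (-(ω * t)) := Real.sinh_lt_cosh _
    rw [Real.sinh_neg, Real.cosh_neg] at h1; linarith
  have htanh_eq : Real.tanh (ω * t) = s / c := Real.tanh_eq_sinh_div_cosh _
  have hx1 : Real.tanh (ω * t) ≠ 1 := by
    rw [htanh_eq]; intro h
    rw [div_eq_one_iff_eq hcpos.ne'] at h; linarith
  have hx2 : Real.tanh (ω * t) ≠ -1 := by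
    rw [htanh_eq]; intro h
    rw [div_eq_iff hcpos.ne'] at h; linarith
  have hsqrt : Real.sqrt (1 - Real.tanh (ω * t) ^ 2) = 1 / c := by
    rw [htanh_eq]
    have : 1 - (s / c) ^ 2 = (1 / c) ^ 2 := by
      field_simp; linarith
    rw [this, Real.sqrt_sq (by positivity)]
  -- derivative of tanh (ω t)
  have htanh : HasDerivAt (fun t : ℝ => Real.tanh (ω * t)) (ω / c ^ 2) t := by
    have hd : HasDerivAt (fun u : ℝ => Real.sinh (ω * u) / Real.cosh (ω * u))
        ((Real.cosh (ω * t) * ω * Real.cosh (ω * t) -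
          Real.sinh (ω * t) * (Real.sinh (ω * t) * ω)) / Real.cosh (ω * t) ^ 2) t :=
      (((Real.hasDerivAt_sinh (ω * t)).comp t (hlin t)).div
        ((Real.hasDerivAt_cosh (ω * t)).comp t (hlin t)) hcpos.ne')
    simp only [Real.tanh_eq_sinh_div_cosh]
    convert hd using 1
    rw [← hc, ← hs]
    field_simp
    nlinarith [hcs]
  -- derivative of φ
  have hdφ : HasDerivAt φ (B / c) t := by
    have harc := (Real.hasDerivAt_arcsin hx2 hx1).comp t htanh
    have h2 : HasDerivAt φ (B / ω * (1 / Real.sqrt (1 - Real.tanh (ω * t) ^ 2) * (ω / c ^ 2))) t := by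
      rw [hφ]; exact (harc.const_mul (B / ω)).const_add φ₀
    convert h2 using 1
    rw [hsqrt]
    field_simp
  have hdφ' : deriv φ t = B / c := hdφ.deriv
  -- value of V (φ t)
  have hVφ : V (φ t) = 3 * ω ^ 2 / K ^ 2 + B ^ 2 * (1 / c) ^ 2 := by
    rw [hV, hφ]
    have harg : ω / B * (φ₀ + B / ω * Real.arcsin (Real.tanh (ω * t)) - φ₀) =
        Real.arcsin (Real.tanh (ω * t)) := by
      field_simp
      ring
    simp only [harg]
    rw [Real.cos_arcsin, hsqrt]
  have haval : a t = A * c := by rw [ha]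
  have hHval : H t = deriv a t / a t := by rw [hH]
  have hρval : ρ t = (B / c) ^ 2 / 2 + (3 * ω ^ 2 / K ^ 2 + B ^ 2 * (1 / c) ^ 2) := by
    rw [hρ]; simp only; rw [hdφ', hVφ]
  have hpval : p t = (B / c) ^ 2 / 2 - (3 * ω ^ 2 / K ^ 2 + B ^ 2 * (1 / c) ^ 2) := by
    rw [hp]; simp only; rw [hdφ', hVφ]
  constructor
  · rw [hHval, hρval, haval, hda']
    have hKne : K ≠ 0 := hK.ne'
    have hAne : A ≠ 0 := hA.ne'
    have key : K ^ 2 * A ^ 2 * B ^ 2 = 2 * (1 - A ^ 2 * ω ^ 2) := by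
      rw [hB2]; field_simp
    simp only; rw [← hs]
    field_simp
    linear_combination (-(6 * A ^ 2 * ω ^ 2)) * hcs +
      (-3) * key
  · rw [hdda, haval, hρval, hpval, ← hc]
    have hKne : K ≠ 0 := hK.ne'
    have hAne : A ≠ 0 := hA.ne'
    field_simp
    ring
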